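/- Consider a finite two-player game in which player 1 has n₁ pure strategies and payoff matrix A₁ (an n₁×n₂ real matrix, entry (j,i) being player 1's payoff from pure strategy j against the opponent's pure strategy i) and player 2 has n₂ pure strategies and payoff matrix A₂ (an n₂×n₁ real matrix defined analogously), with n₁, n₂ ≥ 2. If the game has a completely mixed Nash equilibrium (x, y), then for each player i ∈ {1,2} and for every vector v ∈ ℝ^{nᵢ−1} there exists a column d of the payoff difference matrix D(Aᵢ) with vᵀd ≤ 0; that is, HS(D(Aᵢ)) = ℝ^{nᵢ−1} for both i = 1, 2. -/

import Mathlib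

/-- The payoff difference matrix `D(A)`: row `k` is row `k` of `A` minus row `k+1`. -/
def Dmat {n m : ℕ} (A : Matrix (Fin (n + 1)) (Fin m) ℝ) :
    Matrix (Fin n) (Fin m) ℝ :=
  fun k i => A k.castSucc i - A k.succ i

/-- Membership in the standard simplex of `ℝᵏ`. -/
def InSimplex {k : ℕ} (x : Fin k → ℝ) : Prop :=
  (∀ i, 0 ≤ x i) ∧ ∑ i, x i = 1

/-- `(x, y)` is a Nash equilibrium of the bimatrix game with payoff matrices
`A₁` (for player 1) and `A₂` (for player 2). -/
def IsNash {n₁ n₂ : ℕ} (A₁ : Matrix (Fin n₁) (Fin n₂) ℝ)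
    (A₂ : Matrix (Fin n₂) (Fin n₁) ℝ) (x : Fin n₁ → ℝ) (y : Fin n₂ → ℝ) : Prop :=
  InSimplex x ∧ InSimplex y ∧
    (∀ x' : Fin n₁ → ℝ, InSimplex x' → dotProduct x' (A₁.mulVec y) ≤ dotProduct x (A₁.mulVec y)) ∧
    (∀ y' : Fin n₂ → ℝ, InSimplex y' → dotProduct y' (A₂.mulVec x) ≤ dotProduct y (A₂.mulVec x))

lemma single_inSimplex {k : ℕ} (j : Fin k) : InSimplex (Pi.single j (1:ℝ)) := by
  constructor
  · intro i
    by_cases h : i = j <;> simp [h, Pi.single_apply]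
  · simp

lemma const_payoff {n m : ℕ} (A : Matrix (Fin n) (Fin m) ℝ)
    (x : Fin n → ℝ) (y : Fin m → ℝ) (hxs : InSimplex x) (hxp : ∀ j, 0 < x j)
    (hbr : ∀ x', InSimplex x' →
      dotProduct x' (A.mulVec y) ≤ dotProduct x (A.mulVec y)) :
    ∀ j, A.mulVec y j = dotProduct x (A.mulVec y) := by
  intro j
  set w := A.mulVec y
  set c := dotProduct x w with hc
  have hle : ∀ j, w j ≤ c := by
    intro j
    have := hbr _ (single_inSimplex j)
    simpa [dotProduct, Pi.single_apply] using this
  by_contra hne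
  have hlt : w j < c := lt_of_le_of_ne (hle j) hne
  have h1 : ∑ i, x i * w i < ∑ i, x i * c := by
    apply Finset.sum_lt_sum (fun i _ => mul_le_mul_of_nonneg_left (hle i) (hxp i).le)
    exact ⟨j, Finset.mem_univ j, mul_lt_mul_of_pos_left hlt (hxp j)⟩
  have h2 : ∑ i, x i * c = c := by
    rw [← Finset.sum_mul, hxs.2, one_mul]
  have hc2 : c = ∑ i, x i * w i := rfl
  linarith [hc2 ▸ h1, h2]

lemma half_cover {n m : ℕ} (A : Matrix (Fin (n + 1)) (Fin m) ℝ)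
    (y : Fin m → ℝ) (hys : InSimplex y) (hyp : ∀ i, 0 < y i)
    (hconst : ∀ j j', A.mulVec y j = A.mulVec y j') :
    ∀ v : Fin n → ℝ, ∃ i : Fin m, ∑ k, v k * Dmat A k i ≤ 0 := by
  intro v
  by_contra h
  push_neg at h
  have hzero : ∑ i, y i * (∑ k, v k * Dmat A k i) = 0 := by
    have step : ∑ i, y i * (∑ k, v k * Dmat A k i)
        = ∑ k, ∑ i, y i * (v k * Dmat A k i) := by
      simp only [Finset.mul_sum]
      exact Finset.sum_comm
    rw [step]
    apply Finset.sum_eq_zero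
    intro k _
    have h1 : ∑ i, y i * (v k * Dmat A k i)
        = v k * (A.mulVec y k.castSucc - A.mulVec y k.succ) := by
      simp only [Matrix.mulVec, dotProduct, Dmat, ← Finset.sum_sub_distrib,
        Finset.mul_sum]
      apply Finset.sum_congr rfl
      intro i _
      ring
    rw [h1, hconst k.castSucc k.succ, sub_self, mul_zero]
  have hm : 0 < m := by
    rcases Nat.eq_zero_or_pos m with rfl | h
    · have := hys.2; simp at this
    · exact h
  have hne : (Finset.univ : Finset (Fin m)).Nonempty := ⟨⟨0, hm⟩, Finset.mem_univ _⟩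
  have hpos : 0 < ∑ i, y i * (∑ k, v k * Dmat A k i) :=
    Finset.sum_pos (fun i _ => mul_pos (hyp i) (h i)) hne
  linarith

/-- If a bimatrix game (with `nᵢ ≥ 2` pure strategies for player `i`, here `nᵢ = nᵢ' + 2`)
has a completely mixed Nash equilibrium, then for each player `i` the union of the half
spaces induced by the columns of `D(Aᵢ)` covers `ℝ^{nᵢ - 1}`: for every `v` there is a
column `d` of `D(Aᵢ)` with `vᵀd ≤ 0`. -/
theorem completely_mixed_nash_implies_halfspace_cover {n₁' n₂' : ℕ}
    (A₁ : Matrix (Fin (n₁' + 2)) (Fin (n₂' + 2)) ℝ)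
    (A₂ : Matrix (Fin (n₂' + 2)) (Fin (n₁' + 2)) ℝ)
    (x : Fin (n₁' + 2) → ℝ) (y : Fin (n₂' + 2) → ℝ)
    (hNash : IsNash A₁ A₂ x y)
    (hx : ∀ j, 0 < x j) (hy : ∀ i, 0 < y i) :
    (∀ v : Fin (n₁' + 1) → ℝ, ∃ i : Fin (n₂' + 2), ∑ k, v k * Dmat A₁ k i ≤ 0) ∧
    (∀ v : Fin (n₂' + 1) → ℝ, ∃ i : Fin (n₁' + 2), ∑ k, v k * Dmat A₂ k i ≤ 0) := by
  obtain ⟨hxs, hys, hbr1, hbr2⟩ := hNash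
  constructor
  · exact half_cover A₁ y hys hy (fun j j' => by
      rw [const_payoff A₁ x y hxs hx hbr1 j, const_payoff A₁ x y hxs hx hbr1 j'])
  · exact half_cover A₂ x hxs hx (fun j j' => by
      rw [const_payoff A₂ y x hys hy hbr2 j, const_payoff A₂ y x hys hy hbr2 j'])
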